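/- Let b > 0 and p_k = 1/2 − b/√k for all k larger than some m, with p_k ∈ [0,1] arbitrary for k ≤ m, and let σ_n = 2(∑_{k=1}^n p_k(1−p_k))^{1/2}. Then for any constant Z₀, the quantity (Z₀/2 + ∑_{k=1}^n p_k − n/2)/√(∑_{k=1}^n p_k(1−p_k)) converges to −4b as n → ∞. -/

import Mathlib

open Filter

private lemma S_bounds (n : ℕ) :
    2*(Real.sqrt (n+1) - 1) ≤ (∑ k ∈ Finset.Icc 1 n, 1/Real.sqrt k) ∧
      (∑ k ∈ Finset.Icc 1 n, 1/Real.sqrt k) ≤ 2*Real.sqrt n := by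
  induction n with
  | zero => simp
  | succ n ih =>
    rw [Finset.sum_Icc_succ_top (by omega : 1 ≤ n+1)]
    obtain ⟨ihl, ihr⟩ := ih
    have h1 : (0:ℝ) ≤ (n:ℝ) := Nat.cast_nonneg n
    set a := Real.sqrt n with ha
    set c := Real.sqrt ((n:ℝ)+1) with hc
    set d := Real.sqrt ((n:ℝ)+2) with hd
    have ha0 : 0 ≤ a := Real.sqrt_nonneg _
    have hc0 : 0 < c := Real.sqrt_pos.2 (by linarith)
    have hd0 : 0 ≤ d := Real.sqrt_nonneg _
    have ha2 : a^2 = n := Real.sq_sqrt h1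
    have hc2 : c^2 = (n:ℝ)+1 := Real.sq_sqrt (by linarith)
    have hd2 : d^2 = (n:ℝ)+2 := Real.sq_sqrt (by linarith)
    have hcast : Real.sqrt ((n:ℕ)+1 : ℕ) = c := by push_cast; rfl
    constructor
    · have key : 2*(d - c) ≤ 1/c := by
        rw [le_div_iff₀ hc0]
        nlinarith [sq_nonneg (d - c)]
      push_cast
      rw [show ((n:ℝ)+1+1) = ((n:ℝ)+2) from by ring]
      linarith [key, ihl]
    · have key : 1/c ≤ 2*(c - a) := by
        rw [div_le_iff₀ hc0]
        nlinarith [sq_nonneg (c - a)]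
      push_cast
      linarith [key, ihr]

private lemma inv_sqrt_tendsto :
    Tendsto (fun n : ℕ => 1/Real.sqrt n) atTop (nhds 0) := by
  have h := (tendsto_const_div_atTop_nhds_zero_nat 1).sqrt
  rw [Real.sqrt_zero] at h
  refine h.congr fun n => ?_
  rw [one_div, one_div, Real.sqrt_inv]

private lemma S_div_tendsto :
    Tendsto (fun n : ℕ => (∑ k ∈ Finset.Icc 1 n, 1/Real.sqrt k) / Real.sqrt n)
      atTop (nhds 2) := by
  have hl : Tendsto (fun n : ℕ => 2 - 2*(1/Real.sqrt n)) atTop (nhds 2) := by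
    have := (inv_sqrt_tendsto.const_mul 2)
    simpa using (tendsto_const_nhds.sub this)
  refine tendsto_of_tendsto_of_tendsto_of_le_of_le' hl tendsto_const_nhds ?_ ?_
  · filter_upwards [eventually_ge_atTop 1] with n hn
    have hs : 0 < Real.sqrt n := Real.sqrt_pos.2 (by exact_mod_cast hn)
    have hn0 : (0:ℝ) < n := by exact_mod_cast hn
    have h := (S_bounds n).1
    have hcc : Real.sqrt n ≤ Real.sqrt ((n:ℝ)+1) := Real.sqrt_le_sqrt (by linarith)
    have hinv : (1/Real.sqrt n) * Real.sqrt n = 1 := one_div_mul_cancel hs.ne'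
    rw [le_div_iff₀ hs]
    nlinarith [h, hcc, hinv]
  · filter_upwards [eventually_ge_atTop 1] with n hn
    have hs : 0 < Real.sqrt n := Real.sqrt_pos.2 (by exact_mod_cast hn)
    rw [div_le_iff₀ hs]
    have := (S_bounds n).2
    linarith

private lemma H_div_tendsto :
    Tendsto (fun n : ℕ => (∑ k ∈ Finset.Icc 1 n, 1/(k:ℝ)) / n)
      atTop (nhds 0) := by
  have hu : Tendsto (fun n : ℕ => 2*(1/Real.sqrt n)) atTop (nhds 0) := by
    simpa using inv_sqrt_tendsto.const_mul 2
  refine tendsto_of_tendsto_of_tendsto_of_le_of_le' tendsto_const_nhds hu ?_ ?_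
  · filter_upwards [eventually_ge_atTop 1] with n hn
    have hn0 : (0:ℝ) < n := by exact_mod_cast hn
    positivity
  · filter_upwards [eventually_ge_atTop 1] with n hn
    have hn0 : (0:ℝ) < n := by exact_mod_cast hn
    have hs : 0 < Real.sqrt n := Real.sqrt_pos.2 hn0
    have hHS : (∑ k ∈ Finset.Icc 1 n, 1/(k:ℝ)) ≤ ∑ k ∈ Finset.Icc 1 n, 1/Real.sqrt k := by
      apply Finset.sum_le_sum
      intro k hk
      have hk1 : 1 ≤ k := (Finset.mem_Icc.1 hk).1
      have hk0 : (0:ℝ) < k := by exact_mod_cast hk1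
      have : Real.sqrt k ≤ k := by
        nlinarith [Real.sq_sqrt hk0.le, Real.sqrt_nonneg (k:ℝ), Real.sqrt_le_sqrt (show (1:ℝ) ≤ k by exact_mod_cast hk1), Real.sqrt_one]
      exact one_div_le_one_div_of_le (Real.sqrt_pos.2 hk0) this
    have hS := (S_bounds n).2
    have hsq : Real.sqrt n * Real.sqrt n = n := Real.mul_self_sqrt hn0.le
    rw [div_le_iff₀ hn0]
    calc (∑ k ∈ Finset.Icc 1 n, 1/(k:ℝ)) ≤ 2*Real.sqrt n := le_trans hHS hS
      _ = 2*(1/Real.sqrt n)*n := by field_simp; nlinarith [hsq]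

/-- Let `b > 0` and `p_k = 1/2 − b/√k` for `k > m` (with `p_k ∈ [0,1]` arbitrary for
`k ≤ m`). Then `(Z₀/2 + ∑_{k=1}^n p_k − n/2)/√(∑_{k=1}^n p_k(1−p_k)) → −4b`. -/
theorem mean_over_sd_tendsto (b : ℝ) (hb : 0 < b) (m : ℕ) (p : ℕ → ℝ)
    (hp01 : ∀ k, p k ∈ Set.Icc (0:ℝ) 1)
    (hsmall : ∀ k > m, b / Real.sqrt k ≤ 1/2)
    (hpk : ∀ k > m, p k = 1/2 - b / Real.sqrt k) (Z0 : ℝ) :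
    Tendsto (fun n : ℕ =>
        (Z0 / 2 + (∑ k ∈ Finset.Icc 1 n, p k) - n / 2) /
          Real.sqrt (∑ k ∈ Finset.Icc 1 n, p k * (1 - p k)))
      atTop (nhds (-4 * b)) := by
  -- notation
  set S : ℕ → ℝ := fun n => ∑ k ∈ Finset.Icc 1 n, 1/Real.sqrt k with hS
  set H : ℕ → ℝ := fun n => ∑ k ∈ Finset.Icc 1 n, 1/(k:ℝ) with hH
  set num : ℕ → ℝ := fun n => Z0 / 2 + (∑ k ∈ Finset.Icc 1 n, p k) - n / 2 with hnum
  set Q : ℕ → ℝ := fun n => ∑ k ∈ Finset.Icc 1 n, p k * (1 - p k) with hQ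
  set A : ℝ := Z0/2 + (∑ k ∈ Finset.Icc 1 m, p k) - m/2 + b * S m with hA
  set B : ℝ := (∑ k ∈ Finset.Icc 1 m, p k * (1 - p k)) - m/4 + b^2 * H m with hB
  -- decomposition of num for n ≥ m
  have hIcc : ∀ n : ℕ, Finset.Icc 1 n = Finset.Ioc 0 n := fun n => by
    rw [← Finset.Icc_add_one_left_eq_Ioc]; rfl
  have hnum_eq : ∀ n ≥ m, num n = A - b * S n := by
    intro n hn
    have hsplit : ∀ f : ℕ → ℝ, (∑ k ∈ Finset.Icc 1 n, f k)
        = (∑ k ∈ Finset.Icc 1 m, f k) + ∑ k ∈ Finset.Ioc m n, f k := by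
      intro f
      rw [hIcc, hIcc, Finset.sum_Ioc_consecutive _ (Nat.zero_le m) hn]
    have hps : (∑ k ∈ Finset.Ioc m n, p k)
        = ((n:ℝ) - m)/2 - b * (S n - S m) := by
      have h1 : (∑ k ∈ Finset.Ioc m n, p k)
          = ∑ k ∈ Finset.Ioc m n, (1/2 - b * (1/Real.sqrt k)) := by
        apply Finset.sum_congr rfl
        intro k hk
        rw [hpk k (Finset.mem_Ioc.1 hk).1]
        ring
      rw [h1, Finset.sum_sub_distrib, Finset.sum_const, ← Finset.mul_sum,
        Nat.card_Ioc]
      have h2 : (∑ k ∈ Finset.Ioc m n, 1/Real.sqrt k) = S n - S m := by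
        have := hsplit (fun k => 1/Real.sqrt k); simp only [hS]; linarith [this]
      rw [nsmul_eq_mul, Nat.cast_sub hn, h2]
      push_cast
      ring
    simp only [hnum, hA]
    rw [hsplit p, hps]
    ring
  have hQ_eq : ∀ n ≥ m, Q n = B + n/4 - b^2 * H n := by
    intro n hn
    have hsplit : ∀ f : ℕ → ℝ, (∑ k ∈ Finset.Icc 1 n, f k)
        = (∑ k ∈ Finset.Icc 1 m, f k) + ∑ k ∈ Finset.Ioc m n, f k := by
      intro f
      rw [hIcc, hIcc, Finset.sum_Ioc_consecutive _ (Nat.zero_le m) hn]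
    have hqs : (∑ k ∈ Finset.Ioc m n, p k * (1 - p k))
        = ((n:ℝ) - m)/4 - b^2 * (H n - H m) := by
      have h1 : (∑ k ∈ Finset.Ioc m n, p k * (1 - p k))
          = ∑ k ∈ Finset.Ioc m n, (1/4 - b^2 * (1/(k:ℝ))) := by
        apply Finset.sum_congr rfl
        intro k hk
        have hkm := (Finset.mem_Ioc.1 hk).1
        have hk0 : (0:ℝ) < k := by exact_mod_cast Nat.lt_of_le_of_lt (Nat.zero_le m) hkm
        have hsq : Real.sqrt k * Real.sqrt k = k := Real.mul_self_sqrt hk0.le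
        have hs0 : Real.sqrt k ≠ 0 := by positivity
        rw [hpk k hkm]
        field_simp
        ring_nf
        nlinarith [hsq]
      rw [h1, Finset.sum_sub_distrib, Finset.sum_const, ← Finset.mul_sum,
        Nat.card_Ioc]
      have h2 : (∑ k ∈ Finset.Ioc m n, 1/(k:ℝ)) = H n - H m := by
        have := hsplit (fun k => 1/(k:ℝ)); simp only [hH]; linarith [this]
      rw [nsmul_eq_mul, Nat.cast_sub hn, h2]
      push_cast
      ring
    simp only [hQ, hB]
    rw [hsplit (fun k => p k * (1 - p k)), hqs]
    ring
  -- limit of num n / sqrt n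
  have hnum_lim : Tendsto (fun n : ℕ => num n / Real.sqrt n) atTop (nhds (-2*b)) := by
    have h1 : Tendsto (fun n : ℕ => A * (1/Real.sqrt n) - b * (S n / Real.sqrt n))
        atTop (nhds (A * 0 - b * 2)) :=
      (inv_sqrt_tendsto.const_mul A).sub (S_div_tendsto.const_mul b)
    rw [show A * 0 - b * 2 = -2*b from by ring] at h1
    refine h1.congr' ?_
    filter_upwards [eventually_ge_atTop m] with n hm
    rw [hnum_eq n hm]
    ring
  -- limit of Q n / n
  have hQ_lim : Tendsto (fun n : ℕ => Q n / n) atTop (nhds (1/4)) := by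
    have h1 : Tendsto (fun n : ℕ => B / n + (n:ℝ)/4/n - b^2 * (H n / n))
        atTop (nhds (1/4)) := by
      have hBn := tendsto_const_div_atTop_nhds_zero_nat B
      have hHn := H_div_tendsto.const_mul (b^2)
      have hmid : Tendsto (fun n : ℕ => (n:ℝ)/4/n) atTop (nhds (1/4)) := by
        refine tendsto_const_nhds.congr' ?_
        filter_upwards [eventually_ge_atTop 1] with n hn
        have : (n:ℝ) ≠ 0 := by
          have : (0:ℝ) < n := by exact_mod_cast hn
          positivity
        field_simp
      have h := (hBn.add hmid).sub hHn
      rw [show (0 + 1/4 - b^2 * 0 : ℝ) = 1/4 from by ring] at h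
      exact h
    refine h1.congr' ?_
    filter_upwards [eventually_ge_atTop m] with n hm
    rw [hQ_eq n hm]
    ring
  -- limit of sqrt(Q n / n)
  have hsqrtQ : Tendsto (fun n : ℕ => Real.sqrt (Q n / n)) atTop (nhds (1/2)) := by
    have := hQ_lim.sqrt
    have h4 : Real.sqrt (1/4) = 1/2 := by
      rw [show (1/4 : ℝ) = (1/2)^2 by norm_num, Real.sqrt_sq (by norm_num)]
    rwa [h4] at this
  -- combine
  have hmain : Tendsto (fun n : ℕ => (num n / Real.sqrt n) / Real.sqrt (Q n / n))
      atTop (nhds (-4*b)) := by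
    have h := hnum_lim.div hsqrtQ (by norm_num : (1/2:ℝ) ≠ 0)
    rw [show (-2*b)/(1/2 : ℝ) = -4*b from by ring] at h
    exact h
  refine hmain.congr' ?_
  filter_upwards [eventually_ge_atTop 1] with n hn
  have hn0 : (0:ℝ) < n := by exact_mod_cast hn
  have hQnn : 0 ≤ Q n := by
    apply Finset.sum_nonneg
    intro k _
    have h := hp01 k
    have h0 := h.1
    have h1 := h.2
    nlinarith
  have hs : Real.sqrt n ≠ 0 := by positivity
  rw [Real.sqrt_div hQnn, div_div_div_cancel_right₀ hs]
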